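/- arXiv:2310.01618 — 3 statements merged into one kernel-verified Lean document; each statement's English description precedes it below -/
import Mathlib

section
/- Let H be a real normed lattice additive group, let s be a nonempty finite index set, and let a, b : s → H be finite families. Then ‖(sup'_{i ∈ s} a_i) − (sup'_{i ∈ s} b_i)‖ ≤ Σ_{i ∈ s} ‖a_i − b_i‖, where sup' denotes the supremum (join) of the nonempty finite family in the lattice H. -/
/-- In a normed lattice additive group H, for nonempty finite
families a, b : s → H one has
‖sup'_{i∈s} a_i − sup'_{i∈s} b_i‖ ≤ Σ_{i∈s} ‖a_i − b_i‖. -/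
theorem stmt_10 {H : Type*} [NormedAddCommGroup H] [Lattice H] [HasSolidNorm H]
    [IsOrderedAddMonoid H] {ι : Type*}
    (s : Finset ι) (hs : s.Nonempty) (a b : ι → H) :
    ‖s.sup' hs a - s.sup' hs b‖ ≤ ∑ i ∈ s, ‖a i - b i‖ := by
  induction hs using Finset.Nonempty.cons_induction with
  | singleton i => simp
  | cons i t hi ht ih =>
    rw [Finset.sup'_cons (H := ht), Finset.sup'_cons (H := ht), Finset.sum_cons]
    exact (norm_sup_sub_sup_le_add_norm _ _ _ _).trans
      (add_le_add le_rfl ih)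
end

section
/- Let V be a nonempty finite set of vertices, let N : V → Finset V assign to each vertex a nonempty neighborhood, let H be the real Lebesgue space L²([-1,1]) (with its lattice structure), and let W : H →L[ℝ] H be a continuous linear map with operator norm at most L. For f : V → H define the GNN aggregation operator T(f)(v) = sup'_{u ∈ N(v)} (W (f u))⁺. Then for all f, g : V → H, Σ_{v ∈ V} ‖T(f)(v) − T(g)(v)‖ ≤ L · Σ_{u ∈ V} c_u · ‖f(u) − g(u)‖, where c_u = |{v ∈ V : u ∈ N(v)}| is the number of neighborhoods containing u. -/
open MeasureTheory

lemma norm_sup'_sub_sup'_le {α ι : Type*} [NormedAddCommGroup α] [Lattice α] [HasSolidNorm α] [IsOrderedAddMonoid α]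
    (s : Finset ι) (hs : s.Nonempty) (a b : ι → α) :
    ‖s.sup' hs a - s.sup' hs b‖ ≤ ∑ u ∈ s, ‖a u - b u‖ := by
  induction hs using Finset.Nonempty.cons_induction with
  | singleton i => simp
  | cons i s hi hs ih =>
      rw [Finset.sup'_cons (H := hs), Finset.sup'_cons (H := hs), Finset.sum_cons]
      exact le_trans (norm_sup_sub_sup_le_add_norm _ _ _ _) (by gcongr)

/-- The Hilbert lattice H = L²([-1,1]) of real square-integrable functions. -/
noncomputable abbrev GNNFeatureSpace : Type :=
  MeasureTheory.Lp ℝ 2 ((MeasureTheory.volume : Measure ℝ).restrict (Set.Icc (-1 : ℝ) 1))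

/-- For the GNN aggregation operator
T(f)(v) = sup'_{u ∈ N(v)} (W (f u))⁺ on families of features in H = L²([-1,1]),
with W a continuous linear map of operator norm at most L,
Σ_v ‖T(f)(v) − T(g)(v)‖ ≤ L · Σ_u c_u ‖f(u) − g(u)‖, where c_u is the number
of neighborhoods containing u. -/
theorem stmt_11 {V : Type*} [Fintype V] [Nonempty V] [DecidableEq V]
    (N : V → Finset V) (hN : ∀ v : V, (N v).Nonempty)
    (W : GNNFeatureSpace →L[ℝ] GNNFeatureSpace) (L : ℝ) (hW : ‖W‖ ≤ L)
    (T : (V → GNNFeatureSpace) → V → GNNFeatureSpace)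
    (hT : ∀ f v, T f v = (N v).sup' (hN v) fun u => (W (f u))⁺)
    (c : V → ℕ) (hc : ∀ u : V, c u = (Finset.univ.filter fun v => u ∈ N v).card)
    (f g : V → GNNFeatureSpace) :
    ∑ v : V, ‖T f v - T g v‖ ≤ L * ∑ u : V, (c u : ℝ) * ‖f u - g u‖ := by
  have key : ∀ v, ‖T f v - T g v‖ ≤ ∑ u ∈ N v, L * ‖f u - g u‖ := by
    intro v
    rw [hT, hT]
    refine le_trans (norm_sup'_sub_sup'_le _ _ _ _) (Finset.sum_le_sum fun u _ => ?_)
    calc ‖(W (f u))⁺ - (W (g u))⁺‖ ≤ ‖W (f u) - W (g u)‖ :=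
          norm_sup_sub_sup_le_norm _ _ _
      _ = ‖W (f u - g u)‖ := by rw [map_sub]
      _ ≤ ‖W‖ * ‖f u - g u‖ := W.le_opNorm _
      _ ≤ L * ‖f u - g u‖ := by
          exact mul_le_mul_of_nonneg_right hW (norm_nonneg _)
  calc ∑ v : V, ‖T f v - T g v‖ ≤ ∑ v : V, ∑ u ∈ N v, L * ‖f u - g u‖ :=
        Finset.sum_le_sum fun v _ => key v
    _ = ∑ v : V, ∑ u : V, if u ∈ N v then L * ‖f u - g u‖ else 0 := by
        simp [Finset.sum_ite_mem, Finset.univ_inter]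
    _ = ∑ u : V, ∑ v : V, if u ∈ N v then L * ‖f u - g u‖ else 0 := Finset.sum_comm
    _ = L * ∑ u : V, (c u : ℝ) * ‖f u - g u‖ := by
        rw [Finset.mul_sum]
        refine Finset.sum_congr rfl fun u _ => ?_
        rw [Finset.sum_ite, Finset.sum_const_zero, add_zero, Finset.sum_const, hc, nsmul_eq_mul]
        ring
end

section
/- Let V be a nonempty finite set of vertices, let N : V → Finset V assign to each vertex a nonempty neighborhood, let H be the real Lebesgue space L²([-1,1]), and let W : H →L[ℝ] H have operator norm at most L. Define T(f)(v) = sup'_{u ∈ N(v)} (W (f u))⁺ for f : V → H, and let α = max_{u ∈ V} |{v ∈ V : u ∈ N(v)}|. If L·α < 1, then for every f : V → H the fixed point problem T(y) + f = y has a unique solution y : V → H, and the Picard iterates y₀ = f, y_{n+1} = T(y_n) + f converge to this solution in the norm ‖g‖ = Σ_{v ∈ V} ‖g(v)‖ on the product space. -/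
set_option maxHeartbeats 1000000
set_option synthInstance.maxHeartbeats 400000

open MeasureTheory Filter

private lemma sup'_sub_sup'_norm_le {E : Type*} [NormedAddCommGroup E] [Lattice E] [HasSolidNorm E]
    [IsOrderedAddMonoid E] {ι : Type*}
    (s : Finset ι) (hs : s.Nonempty) (F G : ι → E) :
    ‖s.sup' hs F - s.sup' hs G‖ ≤ ∑ u ∈ s, ‖F u - G u‖ := by
  induction s using Finset.cons_induction with
  | empty => exact absurd hs (by simp)
  | cons a s ha ih =>
    rcases s.eq_empty_or_nonempty with rfl | hs'
    · simp
    · rw [Finset.sup'_cons hs', Finset.sup'_cons hs', Finset.sum_cons]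
      exact (norm_sup_sub_sup_le_add_norm _ _ _ _).trans (by gcongr; exact ih hs')

/-- For the GNN aggregation operator
T(f)(v) = sup'_{u ∈ N(v)} (W (f u))⁺ on families of features in H = L²([-1,1]),
with ‖W‖ ≤ L and α = max_u |{v : u ∈ N(v)}| satisfying L·α < 1, the fixed point
problem T(y) + f = y has a unique solution for every f, and the Picard iterates
y₀ = f, y_{n+1} = T(y_n) + f converge to it in the norm Σ_v ‖·(v)‖. -/
theorem stmt_12 {V : Type*} [Fintype V] [Nonempty V] [DecidableEq V]
    (N : V → Finset V) (hN : ∀ v : V, (N v).Nonempty)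
    (W : GNNFeatureSpace →L[ℝ] GNNFeatureSpace) (L : ℝ) (hW : ‖W‖ ≤ L)
    (T : (V → GNNFeatureSpace) → V → GNNFeatureSpace)
    (hT : ∀ f v, T f v = (N v).sup' (hN v) fun u => (W (f u))⁺)
    (α : ℕ)
    (hα : α = Finset.univ.sup' Finset.univ_nonempty
      fun u : V => (Finset.univ.filter fun v => u ∈ N v).card)
    (hcontr : L * (α : ℝ) < 1)
    (f : V → GNNFeatureSpace) :
    ∃ y : V → GNNFeatureSpace, (T y + f = y) ∧
      (∀ y' : V → GNNFeatureSpace, T y' + f = y' → y' = y) ∧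
      ∀ yseq : ℕ → V → GNNFeatureSpace,
        yseq 0 = f → (∀ n : ℕ, yseq (n + 1) = T (yseq n) + f) →
        Tendsto (fun n => ∑ v : V, ‖yseq n v - y v‖) atTop (nhds 0) := by
  have hL : 0 ≤ L := le_trans (norm_nonneg W) hW
  -- work in the ℓ¹ product space
  set X := PiLp 1 (fun _ : V => GNNFeatureSpace) with hX
  haveI : CompleteSpace X := inferInstance
  have hnorm : ∀ g : X, ‖g‖ = ∑ v : V, ‖g v‖ := by
    intro g
    rw [PiLp.norm_eq_sum (by norm_num)]
    simp
  -- the key aggregation estimate, coordinatewise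
  have key : ∀ g h : X, ∑ v : V, ‖T g v - T h v‖ ≤ L * α * ∑ v : V, ‖g v - h v‖ := by
    intro g h
    have step1 : ∀ v : V, ‖T g v - T h v‖ ≤ ∑ u ∈ N v, L * ‖g u - h u‖ := by
      intro v
      rw [hT, hT]
      refine (sup'_sub_sup'_norm_le _ _ _ _).trans (Finset.sum_le_sum fun u _ => ?_)
      calc ‖(W (g u))⁺ - (W (h u))⁺‖ ≤ ‖W (g u) - W (h u)‖ := by
            rw [posPart_def, posPart_def]; exact norm_sup_sub_sup_le_norm _ _ _
        _ = ‖W (g u - h u)‖ := by rw [map_sub]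
        _ ≤ ‖W‖ * ‖g u - h u‖ := W.le_opNorm _
        _ ≤ L * ‖g u - h u‖ := by gcongr
    calc ∑ v : V, ‖T g v - T h v‖
        ≤ ∑ v : V, ∑ u ∈ N v, L * ‖g u - h u‖ := Finset.sum_le_sum fun v _ => step1 v
      _ = ∑ v : V, ∑ u : V, if u ∈ N v then L * ‖g u - h u‖ else 0 := by
          refine Finset.sum_congr rfl fun v _ => ?_
          rw [Finset.sum_ite_mem, Finset.univ_inter]
      _ = ∑ u : V, ∑ v : V, if u ∈ N v then L * ‖g u - h u‖ else 0 := Finset.sum_comm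
      _ = ∑ u : V, ((Finset.univ.filter fun v => u ∈ N v).card : ℝ) * (L * ‖g u - h u‖) := by
          refine Finset.sum_congr rfl fun u _ => ?_
          rw [← Finset.sum_filter, Finset.sum_const, nsmul_eq_mul]
      _ ≤ ∑ u : V, (α : ℝ) * (L * ‖g u - h u‖) := by
          refine Finset.sum_le_sum fun u _ => ?_
          have hcard : (Finset.univ.filter fun v => u ∈ N v).card ≤ α := by
            rw [hα]
            exact Finset.le_sup' (f := fun u : V => (Finset.univ.filter fun v => u ∈ N v).card) (Finset.mem_univ u)
          have := norm_nonneg (g u - h u)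
          gcongr
      _ = L * α * ∑ u : V, ‖g u - h u‖ := by rw [Finset.mul_sum]; ring_nf
  -- the Picard map is a contraction
  set K : NNReal := ⟨L * α, mul_nonneg hL (Nat.cast_nonneg α)⟩ with hKdef
  have hK : (K : ℝ) = L * α := rfl
  set P : X → X := fun g => WithLp.toLp 1 (T g + f) with hP
  have hlip : LipschitzWith K P := by
    intro g h
    rw [edist_nndist, edist_nndist]
    rw [← ENNReal.coe_mul, ENNReal.coe_le_coe, ← NNReal.coe_le_coe,
      NNReal.coe_mul, coe_nndist, coe_nndist, dist_eq_norm, dist_eq_norm, hK,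
      hnorm (P g - P h), hnorm (g - h)]
    have h1 : ∀ v : V, (P g - P h) v = T g v - T h v := by
      intro v
      show (T g v + f v) - (T h v + f v) = T g v - T h v
      abel
    have h2 : ∀ v : V, (g - h : X) v = g v - h v := fun v => rfl
    simp only [h1, h2]
    exact key g h
  have hcw : ContractingWith K P := ⟨by rwa [← NNReal.coe_lt_one, hK], hlip⟩
  set y := hcw.fixedPoint P with hy
  refine ⟨y, ?_, ?_, ?_⟩
  · exact congrArg WithLp.ofLp hcw.fixedPoint_isFixedPt
  · intro y' hy'
    exact congrArg WithLp.ofLp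
        (hcw.fixedPoint_unique (f := P) (x := WithLp.toLp 1 y') (congrArg (WithLp.toLp 1) hy'))
  · intro yseq h0 hsucc
    have hiter : ∀ n, yseq n = P^[n] (WithLp.toLp 1 f) := by
      intro n
      induction n with
      | zero => simpa using h0
      | succ n ih => rw [hsucc, ih, Function.iterate_succ_apply']
    set yseqX : ℕ → X := fun n => WithLp.toLp 1 (yseq n) with hyX
    have htend : Tendsto yseqX atTop (nhds y) := by
      have : yseqX = fun n => P^[n] (WithLp.toLp 1 f) :=
          funext fun n => by exact congrArg (WithLp.toLp 1) (hiter n)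
      rw [this]
      exact hcw.tendsto_iterate_fixedPoint (WithLp.toLp 1 f)
    have hnt : Tendsto (fun n => dist (yseqX n) y) atTop (nhds 0) :=
      tendsto_iff_dist_tendsto_zero.mp htend
    refine hnt.congr fun n => ?_
    rw [dist_eq_norm]
    exact hnorm _
end
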